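/- Fix h : ℕ and δ ∈ (0,1]. Let K : Fin (h+1) → PMF (Fin (h+1)) be a Markov kernel on the states {0, 1, …, h} such that (i) the chain never decreases: for all states k and k', if k' < k then (K k) k' = 0; and (ii) the chain is δ-progressive below h: for every state k < h, the total probability under K k of the set of states strictly greater than k is at least δ. Let μ_0 = pure 0 and μ_{n+1} = μ_n.bind K be the distribution of the chain after n steps started at state 0. Then μ_n(h) → 1 as n → ∞; i.e., the chain reaches the absorbing top state h with probability tending to 1. -/

import Mathlib

open scoped ENNReal

/-- A nondecreasing, δ-progressive Markov chain on `{0, …, h}` started at `0`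
reaches the absorbing top state `h` with probability tending to `1`. -/
theorem markov_chain_progress_tendsto_one
    (h : ℕ) (δ : ℝ) (hδ0 : 0 < δ) (hδ1 : δ ≤ 1)
    (K : Fin (h + 1) → PMF (Fin (h + 1)))
    (hmono : ∀ k k' : Fin (h + 1), k' < k → K k k' = 0)
    (hprog : ∀ k : Fin (h + 1), (k : ℕ) < h →
      ENNReal.ofReal δ ≤ ∑ k' ∈ Finset.univ.filter (fun k' : Fin (h + 1) => k < k'), K k k')
    (μ : ℕ → PMF (Fin (h + 1)))
    (hμ0 : μ 0 = PMF.pure 0)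
    (hμ : ∀ n, μ (n + 1) = (μ n).bind K) :
    Filter.Tendsto (fun n => μ n (Fin.last h)) Filter.atTop (nhds 1) := by
  classical
  set d := ENNReal.ofReal δ with hd
  have hd0 : d ≠ 0 := by
    simp [hd, ENNReal.ofReal_eq_zero, not_le, hδ0]
  have hdtop : d ≠ ∞ := ENNReal.ofReal_ne_top
  -- f j n = P(X_n ≥ j)
  set S : ℕ → Finset (Fin (h + 1)) :=
    fun j => Finset.univ.filter (fun k : Fin (h + 1) => j ≤ (k : ℕ)) with hS
  set f : ℕ → ℕ → ℝ≥0∞ := fun j n => ∑ k ∈ S j, μ n k with hf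
  have hsum : ∀ n, ∑ k : Fin (h + 1), μ n k = 1 := by
    intro n
    rw [← tsum_fintype (L := SummationFilter.unconditional _)]
    exact (μ n).tsum_coe
  have hKsum : ∀ k : Fin (h + 1), ∑ k' : Fin (h + 1), K k k' = 1 := by
    intro k
    rw [← tsum_fintype (L := SummationFilter.unconditional _)]
    exact (K k).tsum_coe
  have hfle : ∀ j n, f j n ≤ 1 := by
    intro j n
    rw [← hsum n]
    exact Finset.sum_le_sum_of_subset (Finset.filter_subset _ _)
  -- the kernel from a state ≥ j stays ≥ j
  have hK1 : ∀ (j : ℕ) (k : Fin (h + 1)), j ≤ (k : ℕ) →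
      ∑ k' ∈ S j, K k k' = 1 := by
    intro j k hjk
    rw [← hKsum k]
    apply Finset.sum_subset (Finset.filter_subset _ _)
    intro x _ hx
    apply hmono
    have hxj : (x : ℕ) < j := by
      by_contra hc
      exact hx (Finset.mem_filter.2 ⟨Finset.mem_univ _, not_lt.1 hc⟩)
    exact Fin.lt_def.2 (lt_of_lt_of_le hxj hjk)
  -- recurrence
  have hrec : ∀ j n, f j (n + 1) = ∑ a : Fin (h + 1), μ n a * ∑ k' ∈ S j, K a k' := by
    intro j n
    have hb : ∀ k' : Fin (h + 1), μ (n + 1) k' = ∑ a : Fin (h + 1), μ n a * K a k' := by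
      intro k'
      rw [hμ n, PMF.bind_apply, tsum_fintype]
    calc f j (n + 1) = ∑ k' ∈ S j, ∑ a : Fin (h + 1), μ n a * K a k' :=
          Finset.sum_congr rfl fun k' _ => hb k'
      _ = ∑ a : Fin (h + 1), ∑ k' ∈ S j, μ n a * K a k' := Finset.sum_comm
      _ = ∑ a : Fin (h + 1), μ n a * ∑ k' ∈ S j, K a k' := by
          simp [Finset.mul_sum]
  -- monotonicity in n
  have hmonof : ∀ j, Monotone (f j) := by
    intro j
    apply monotone_nat_of_le_succ
    intro n
    rw [hrec j n]
    calc f j n = ∑ a ∈ S j, μ n a * ∑ k' ∈ S j, K a k' := by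
          apply Finset.sum_congr rfl
          intro a ha
          rw [hK1 j a (Finset.mem_filter.1 ha).2, mul_one]
      _ ≤ ∑ a : Fin (h + 1), μ n a * ∑ k' ∈ S j, K a k' :=
          Finset.sum_le_sum_of_subset (Finset.filter_subset _ _)
  -- decomposition for j ≤ h : S j = insert jf (S (j+1))
  have hdecomp : ∀ j (hj : j ≤ h),
      ∀ n, f j n = μ n ⟨j, by omega⟩ + f (j + 1) n := by
    intro j hj n
    have hins : S j = insert (⟨j, by omega⟩ : Fin (h + 1)) (S (j + 1)) := by
      ext k
      simp only [hS, Finset.mem_filter, Finset.mem_univ, true_and, Finset.mem_insert]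
      constructor
      · intro hk
        rcases eq_or_lt_of_le hk with h1 | h1
        · left; exact (Fin.ext h1.symm)
        · right; omega
      · rintro (rfl | hk)
        · exact le_refl _
        · omega
    have hnot : (⟨j, by omega⟩ : Fin (h + 1)) ∉ S (j + 1) := by
      simp [hS]
    rw [hf]
    simp only
    rw [hins, Finset.sum_insert hnot]
  -- progress inequality
  have hstep : ∀ j (hj : j < h) n,
      f (j + 1) n + d * μ n ⟨j, by omega⟩ ≤ f (j + 1) (n + 1) := by
    intro j hj n
    rw [hrec (j + 1) n]
    have hins : (Finset.univ : Finset (Fin (h + 1)))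
        = insert (⟨j, by omega⟩ : Fin (h + 1)) ((S (j + 1)) ∪ (Finset.univ \ insert (⟨j, by omega⟩ : Fin (h + 1)) (S (j + 1)))) := by
      ext k; simp
      by_cases hk : k = (⟨j, by omega⟩ : Fin (h + 1)) <;> simp [hk]
      tauto
    -- simpler: bound sum over univ from below by sum over insert jf (S (j+1))
    have hsub : insert (⟨j, by omega⟩ : Fin (h + 1)) (S (j + 1)) ⊆ Finset.univ :=
      Finset.subset_univ _
    have hnot : (⟨j, by omega⟩ : Fin (h + 1)) ∉ S (j + 1) := by
      simp [hS]
    calc f (j + 1) n + d * μ n ⟨j, by omega⟩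
        ≤ (∑ a ∈ S (j + 1), μ n a * ∑ k' ∈ S (j + 1), K a k')
          + μ n ⟨j, by omega⟩ * ∑ k' ∈ S (j + 1), K ⟨j, by omega⟩ k' := by
          refine add_le_add (le_of_eq ?_) ?_
          · apply Finset.sum_congr rfl
            intro a ha
            rw [hK1 (j + 1) a (Finset.mem_filter.1 ha).2, mul_one]
          · -- d * μ ≤ μ * (kernel mass)
            rw [mul_comm]
            apply mul_le_mul_right
            have := hprog ⟨j, by omega⟩ (by simpa using hj)
            refine le_trans this (le_of_eq ?_)
            apply Finset.sum_congr _ (fun _ _ => rfl)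
            ext k'
            simp only [hS, Finset.mem_filter, Finset.mem_univ, true_and]
            rw [Fin.lt_def]
            simp only [Fin.val_mk]
            omega
      _ = ∑ a ∈ insert (⟨j, by omega⟩ : Fin (h + 1)) (S (j + 1)), μ n a * ∑ k' ∈ S (j + 1), K a k' := by
          rw [Finset.sum_insert hnot]; ring
      _ ≤ ∑ a : Fin (h + 1), μ n a * ∑ k' ∈ S (j + 1), K a k' :=
          Finset.sum_le_sum_of_subset hsub
  -- main induction
  have key : ∀ j, j ≤ h → Filter.Tendsto (f j) Filter.atTop (nhds 1) := by
    intro j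
    induction j with
    | zero =>
      intro _
      have : ∀ n, f 0 n = 1 := by
        intro n
        rw [hf]
        simp only [hS]
        rw [show Finset.univ.filter (fun k : Fin (h + 1) => 0 ≤ (k : ℕ)) = Finset.univ by
          simp]
        exact hsum n
      simp only [funext this]
      exact tendsto_const_nhds
    | succ j ih =>
      intro hjh
      have hj : j < h := hjh
      have IH := ih (le_of_lt hj)
      set A := ⨆ n, f (j + 1) n with hA
      have hAt : Filter.Tendsto (f (j + 1)) Filter.atTop (nhds A) :=
        tendsto_atTop_iSup (hmonof (j + 1))
      have hA1 : A ≤ 1 := iSup_le fun n => hfle _ _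
      have hAtop : A ≠ ∞ := ne_top_of_le_ne_top ENNReal.one_ne_top hA1
      -- combined inequality
      have hineq : ∀ n, f (j + 1) n + d * f j n ≤ f (j + 1) (n + 1) + d * f (j + 1) n := by
        intro n
        have h1 := hstep j hj n
        have h2 := hdecomp j (le_of_lt hj) n
        calc f (j + 1) n + d * f j n
            = f (j + 1) n + d * (μ n ⟨j, by omega⟩ + f (j + 1) n) := by rw [h2]
          _ = (f (j + 1) n + d * μ n ⟨j, by omega⟩) + d * f (j + 1) n := by ring
          _ ≤ f (j + 1) (n + 1) + d * f (j + 1) n := by gcongr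
      have hL : Filter.Tendsto (fun n => f (j + 1) n + d * f j n) Filter.atTop
          (nhds (A + d * 1)) :=
        Filter.Tendsto.add hAt (ENNReal.Tendsto.const_mul IH (Or.inr hdtop))
      have hR : Filter.Tendsto (fun n => f (j + 1) (n + 1) + d * f (j + 1) n) Filter.atTop
          (nhds (A + d * A)) :=
        Filter.Tendsto.add (hAt.comp (Filter.tendsto_add_atTop_nat 1))
          (ENNReal.Tendsto.const_mul hAt (Or.inr hdtop))
      have hle : A + d * 1 ≤ A + d * A := le_of_tendsto_of_tendsto' hL hR hineq
      have : d * 1 ≤ d * A := (ENNReal.add_le_add_iff_left hAtop).1 hle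
      have hA1' : (1 : ℝ≥0∞) ≤ A := (ENNReal.mul_le_mul_iff_right hd0 hdtop).1 this
      have : A = 1 := le_antisymm hA1 hA1'
      rw [← this]
      exact hAt
  -- conclude
  have hfh : ∀ n, f h n = μ n (Fin.last h) := by
    intro n
    rw [hf]
    simp only [hS]
    rw [show Finset.univ.filter (fun k : Fin (h + 1) => h ≤ (k : ℕ)) = {Fin.last h} by
      ext k
      simp only [Finset.mem_filter, Finset.mem_univ, true_and, Finset.mem_singleton]
      constructor
      · intro hk
        have := k.isLt
        refine Fin.ext ?_
        simp only [Fin.val_last]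
        omega
      · rintro rfl
        simp [Fin.last]]
    simp
  have := key h le_rfl
  simpa only [funext hfh] using this
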